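/- Let f : ℝ^m × ℝ^n → ℝ^m and g : ℝ^m × ℝ^n → ℝ^n be twice continuously differentiable with bounded derivatives, let α, λ > 0, and fix (φ₀, θ₀). Define the two-player Runge–Kutta-4 step: k₁ = (f, g) at (φ₀, θ₀); k₂ = (f, g) at (φ₀ + (αh/2)k₁^φ, θ₀ + (λh/2)k₁^θ); k₃ = (f, g) at (φ₀ + (αh/2)k₂^φ, θ₀ + (λh/2)k₂^θ); k₄ = (f, g) at (φ₀ + αh·k₃^φ, θ₀ + λh·k₃^θ); and φ₁ = φ₀ + αh·(k₁^φ + 2k₂^φ + 2k₃^φ + k₄^φ)/6, θ₁ = θ₀ + λh·(k₁^θ + 2k₂^θ + 2k₃^θ + k₄^θ)/6. Then φ₁ = φ₀ + αh·f + (1/2)αλh²·g·∇_θ f + (1/2)α²h²·f·∇_φ f + O(h³) and θ₁ = θ₀ + λh·g + (1/2)λ²h²·g·∇_θ g + (1/2)αλh²·f·∇_φ g + O(h³), where f, g and their derivatives are evaluated at (φ₀, θ₀). -/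

import Mathlib

noncomputable section

private lemma lip_of_fderiv_bound' {E F : Type*} [NormedAddCommGroup E] [NormedSpace ℝ E]
    [NormedAddCommGroup F] [NormedSpace ℝ F] {f : E → F} (hf : Differentiable ℝ f)
    {B : ℝ} (hB : ∀ x, ‖fderiv ℝ f x‖ ≤ B) (z w : E) :
    ‖f (z + w) - f z‖ ≤ B * ‖w‖ := by
  have := Convex.norm_image_sub_le_of_norm_fderiv_le (f := f)
    (fun x _ => hf x) (fun x _ => hB x) convex_univ
    (Set.mem_univ z) (Set.mem_univ (z + w))
  simpa using this

private lemma taylor_of_bound' {E F : Type*} [NormedAddCommGroup E] [NormedSpace ℝ E]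
    [NormedAddCommGroup F] [NormedSpace ℝ F] {f : E → F} (hf : ContDiff ℝ 2 f)
    {B : ℝ} (hB : ∀ x, ‖iteratedFDeriv ℝ 2 f x‖ ≤ B) (z w : E) :
    ‖f (z + w) - f z - fderiv ℝ f z w‖ ≤ B * ‖w‖ ^ 2 := by
  have hB0 : 0 ≤ B := (norm_nonneg _).trans (hB z)
  have hf1 : ContDiff ℝ 1 (fderiv ℝ f) := hf.fderiv_right (by norm_num)
  have hD : ∀ x, ‖fderiv ℝ (fderiv ℝ f) x‖ ≤ B := by
    intro x
    have key : ‖fderiv ℝ (fderiv ℝ f) x‖ = ‖iteratedFDeriv ℝ 2 f x‖ := by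
      rw [← norm_iteratedFDeriv_zero (𝕜 := ℝ) (f := fderiv ℝ (fderiv ℝ f)) (x := x),
        norm_iteratedFDeriv_fderiv, norm_iteratedFDeriv_fderiv]
    rw [key]; exact hB x
  have hlip : ∀ x, ‖fderiv ℝ f x - fderiv ℝ f z‖ ≤ B * ‖x - z‖ := by
    intro x
    have := lip_of_fderiv_bound' (hf1.differentiable one_ne_zero) hD z (x - z)
    simpa using this
  have hmem1 : z ∈ Metric.closedBall z ‖w‖ := Metric.mem_closedBall_self (norm_nonneg w)
  have hmem2 : z + w ∈ Metric.closedBall z ‖w‖ := by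
    simp [Metric.mem_closedBall, dist_eq_norm]
  have main := Convex.norm_image_sub_le_of_norm_fderiv_le' (f := f) (φ := fderiv ℝ f z)
    (C := B * ‖w‖)
    (fun x _ => (hf.differentiable (by norm_num)) x)
    (fun x hx => (hlip x).trans (by
      have hxz : ‖x - z‖ ≤ ‖w‖ := by simpa [dist_eq_norm] using hx
      nlinarith [norm_nonneg (x - z)]))
    (convex_closedBall z ‖w‖) hmem1 hmem2
  have hzw : z + w - z = w := by abel
  rw [hzw] at main
  calc ‖f (z + w) - f z - (fderiv ℝ f z) w‖ ≤ B * ‖w‖ * ‖w‖ := main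
    _ = B * ‖w‖ ^ 2 := by ring

private lemma pair_norm_le' {E F : Type*} [NormedAddCommGroup E] [NormedAddCommGroup F]
    {x : E} {y : F} {c : ℝ} (hx : ‖x‖ ≤ c) (hy : ‖y‖ ≤ c) :
    ‖((x, y) : E × F)‖ ≤ c := max_le hx hy

private lemma smul_norm_le' {E : Type*} [NormedAddCommGroup E] [NormedSpace ℝ E]
    {t c d : ℝ} {x : E} (ht : 0 ≤ t) (hx : ‖x‖ ≤ c) (htc : t * c ≤ d) : ‖t • x‖ ≤ d := by
  rw [norm_smul, Real.norm_eq_abs, abs_of_nonneg ht]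
  nlinarith [norm_nonneg x]

set_option maxHeartbeats 2000000 in
/-- **Expansion of the two-player Runge–Kutta-4 step.**
With per-player learning rates `αh` and `λh`,
`φ₁ = φ₀ + αh·f + (1/2)αλh²·g·∇_θ f + (1/2)α²h²·f·∇_φ f + O(h³)` and
`θ₁ = θ₀ + λh·g + (1/2)λ²h²·g·∇_θ g + (1/2)αλh²·f·∇_φ g + O(h³)`,
where `f`, `g` and their derivatives are evaluated at `(φ₀, θ₀)`. -/
theorem two_player_rk4_expansion {m n : ℕ}
    (f : EuclideanSpace ℝ (Fin m) × EuclideanSpace ℝ (Fin n) → EuclideanSpace ℝ (Fin m))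
    (g : EuclideanSpace ℝ (Fin m) × EuclideanSpace ℝ (Fin n) → EuclideanSpace ℝ (Fin n))
    (hf : ContDiff ℝ 2 f) (hg : ContDiff ℝ 2 g)
    (hfb : ∀ i : ℕ, i ≤ 2 → ∃ C : ℝ, ∀ z, ‖iteratedFDeriv ℝ i f z‖ ≤ C)
    (hgb : ∀ i : ℕ, i ≤ 2 → ∃ C : ℝ, ∀ z, ‖iteratedFDeriv ℝ i g z‖ ≤ C)
    (α lam : ℝ) (hα : 0 < α) (hlam : 0 < lam)
    (φ0 : EuclideanSpace ℝ (Fin m)) (θ0 : EuclideanSpace ℝ (Fin n))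
    -- the four RK4 stages, as functions of the step size `h`
    (k1φ k2φ k3φ k4φ : ℝ → EuclideanSpace ℝ (Fin m))
    (k1θ k2θ k3θ k4θ : ℝ → EuclideanSpace ℝ (Fin n))
    (hk1φ : ∀ h : ℝ, k1φ h = f (φ0, θ0))
    (hk1θ : ∀ h : ℝ, k1θ h = g (φ0, θ0))
    (hk2φ : ∀ h : ℝ, k2φ h = f (φ0 + (α * h / 2) • k1φ h, θ0 + (lam * h / 2) • k1θ h))
    (hk2θ : ∀ h : ℝ, k2θ h = g (φ0 + (α * h / 2) • k1φ h, θ0 + (lam * h / 2) • k1θ h))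
    (hk3φ : ∀ h : ℝ, k3φ h = f (φ0 + (α * h / 2) • k2φ h, θ0 + (lam * h / 2) • k2θ h))
    (hk3θ : ∀ h : ℝ, k3θ h = g (φ0 + (α * h / 2) • k2φ h, θ0 + (lam * h / 2) • k2θ h))
    (hk4φ : ∀ h : ℝ, k4φ h = f (φ0 + (α * h) • k3φ h, θ0 + (lam * h) • k3θ h))
    (hk4θ : ∀ h : ℝ, k4θ h = g (φ0 + (α * h) • k3φ h, θ0 + (lam * h) • k3θ h))
    -- the RK4 update
    (φ1 : ℝ → EuclideanSpace ℝ (Fin m)) (θ1 : ℝ → EuclideanSpace ℝ (Fin n))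
    (hφ1 : ∀ h : ℝ, φ1 h =
      φ0 + (α * h / 6) • (k1φ h + (2 : ℝ) • k2φ h + (2 : ℝ) • k3φ h + k4φ h))
    (hθ1 : ∀ h : ℝ, θ1 h =
      θ0 + (lam * h / 6) • (k1θ h + (2 : ℝ) • k2θ h + (2 : ℝ) • k3θ h + k4θ h)) :
    ∃ C > (0 : ℝ), ∃ h0 > (0 : ℝ), ∀ h : ℝ, 0 < h → h < h0 →
      ‖φ1 h -
          (φ0 + (α * h) • f (φ0, θ0) +
            (α * lam * h ^ 2 / 2) • fderiv ℝ f (φ0, θ0) (0, g (φ0, θ0)) +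
            (α ^ 2 * h ^ 2 / 2) • fderiv ℝ f (φ0, θ0) (f (φ0, θ0), 0))‖ ≤ C * h ^ 3 ∧
      ‖θ1 h -
          (θ0 + (lam * h) • g (φ0, θ0) +
            (lam ^ 2 * h ^ 2 / 2) • fderiv ℝ g (φ0, θ0) (0, g (φ0, θ0)) +
            (α * lam * h ^ 2 / 2) • fderiv ℝ g (φ0, θ0) (f (φ0, θ0), 0))‖ ≤ C * h ^ 3 := by
  obtain ⟨Bf0, hBf0⟩ := hfb 0 (by norm_num)
  obtain ⟨Bf1, hBf1⟩ := hfb 1 (by norm_num)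
  obtain ⟨Bf2, hBf2⟩ := hfb 2 le_rfl
  obtain ⟨Bg0, hBg0⟩ := hgb 0 (by norm_num)
  obtain ⟨Bg1, hBg1⟩ := hgb 1 (by norm_num)
  obtain ⟨Bg2, hBg2⟩ := hgb 2 le_rfl
  obtain ⟨B, hBdef⟩ : ∃ B : ℝ, B = 1 + |Bf0| + |Bg0| + |Bf1| + |Bg1| + |Bf2| + |Bg2| :=
    ⟨_, rfl⟩
  have habs : 0 ≤ |Bf0| ∧ 0 ≤ |Bg0| ∧ 0 ≤ |Bf1| ∧ 0 ≤ |Bg1| ∧ 0 ≤ |Bf2| ∧ 0 ≤ |Bg2| :=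
    ⟨abs_nonneg _, abs_nonneg _, abs_nonneg _, abs_nonneg _, abs_nonneg _, abs_nonneg _⟩
  obtain ⟨a0, a1, a2, a3, a4, a5⟩ := habs
  have hB1 : (1:ℝ) ≤ B := by rw [hBdef]; linarith
  have hB0 : (0:ℝ) < B := lt_of_lt_of_le one_pos hB1
  have Pf0 : ∀ x, ‖f x‖ ≤ B := by
    intro x
    have h1 := hBf0 x
    rw [norm_iteratedFDeriv_zero] at h1
    have := le_abs_self Bf0
    rw [hBdef]; linarith
  have Pg0 : ∀ x, ‖g x‖ ≤ B := by
    intro x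
    have h1 := hBg0 x
    rw [norm_iteratedFDeriv_zero] at h1
    have := le_abs_self Bg0
    rw [hBdef]; linarith
  have Pf1 : ∀ x, ‖fderiv ℝ f x‖ ≤ B := by
    intro x
    have key : ‖fderiv ℝ f x‖ = ‖iteratedFDeriv ℝ 1 f x‖ := by
      rw [← norm_iteratedFDeriv_zero (𝕜 := ℝ) (f := fderiv ℝ f) (x := x),
        norm_iteratedFDeriv_fderiv]
    have h1 := hBf1 x
    have := le_abs_self Bf1
    rw [key, hBdef]; linarith
  have Pg1 : ∀ x, ‖fderiv ℝ g x‖ ≤ B := by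
    intro x
    have key : ‖fderiv ℝ g x‖ = ‖iteratedFDeriv ℝ 1 g x‖ := by
      rw [← norm_iteratedFDeriv_zero (𝕜 := ℝ) (f := fderiv ℝ g) (x := x),
        norm_iteratedFDeriv_fderiv]
    have h1 := hBg1 x
    have := le_abs_self Bg1
    rw [key, hBdef]; linarith
  have Pf2 : ∀ x, ‖iteratedFDeriv ℝ 2 f x‖ ≤ B := by
    intro x
    have h1 := hBf2 x
    have := le_abs_self Bf2
    rw [hBdef]; linarith
  have Pg2 : ∀ x, ‖iteratedFDeriv ℝ 2 g x‖ ≤ B := by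
    intro x
    have h1 := hBg2 x
    have := le_abs_self Bg2
    rw [hBdef]; linarith
  have LipF := lip_of_fderiv_bound' (hf.differentiable (by norm_num)) Pf1
  have LipG := lip_of_fderiv_bound' (hg.differentiable (by norm_num)) Pg1
  have TayF := taylor_of_bound' hf Pf2
  have TayG := taylor_of_bound' hg Pg2
  obtain ⟨a, hadef⟩ : ∃ a : ℝ, a = α + lam := ⟨_, rfl⟩
  have ha0 : 0 < a := by rw [hadef]; linarith
  have hαa : α ≤ a := by rw [hadef]; linarith
  have hla : lam ≤ a := by rw [hadef]; linarith
  obtain ⟨D, hDdef⟩ : ∃ D : ℝ, D = a * B := ⟨_, rfl⟩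
  have hD0 : (0:ℝ) < D := by rw [hDdef]; positivity
  refine ⟨20 * D ^ 3, by positivity, min 1 (1 / D), by positivity, ?_⟩
  intro h hh hhlt
  have hh1 : h ≤ 1 := le_of_lt (lt_of_lt_of_le hhlt (min_le_left _ _))
  have hDh : D * h ≤ 1 := by
    have h2 : h < 1 / D := lt_of_lt_of_le hhlt (min_le_right _ _)
    rw [lt_div_iff₀ hD0] at h2
    linarith [mul_comm h D]
  obtain ⟨z0, hz0⟩ : ∃ z0 : EuclideanSpace ℝ (Fin m) × EuclideanSpace ℝ (Fin n),
      z0 = (φ0, θ0) := ⟨_, rfl⟩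
  simp only [← hz0] at hk1φ hk1θ ⊢
  obtain ⟨w1, hw1⟩ : ∃ w1 : EuclideanSpace ℝ (Fin m) × EuclideanSpace ℝ (Fin n),
      w1 = ((α * h / 2) • f z0, (lam * h / 2) • g z0) := ⟨_, rfl⟩
  have hn1 : ‖w1‖ ≤ D * h / 2 := by
    rw [hw1]
    apply pair_norm_le'
    · exact smul_norm_le' (by positivity) (Pf0 z0)
        (by rw [hDdef]; linarith [mul_nonneg (mul_nonneg (sub_nonneg.2 hαa) hB0.le) hh.le])
    · exact smul_norm_le' (by positivity) (Pg0 z0)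
        (by rw [hDdef]; linarith [mul_nonneg (mul_nonneg (sub_nonneg.2 hla) hB0.le) hh.le])
  have z2 : (φ0 + (α * h / 2) • k1φ h, θ0 + (lam * h / 2) • k1θ h) = z0 + w1 := by
    rw [hk1φ h, hk1θ h, hw1, hz0, Prod.mk_add_mk]
  have e2φ : ‖k2φ h - f z0 - fderiv ℝ f z0 w1‖ ≤ B * ‖w1‖ ^ 2 := by
    rw [hk2φ h, z2]; exact TayF z0 w1
  have e2θ : ‖k2θ h - g z0 - fderiv ℝ g z0 w1‖ ≤ B * ‖w1‖ ^ 2 := by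
    rw [hk2θ h, z2]; exact TayG z0 w1
  have hBw1 : B * ‖w1‖ ≤ B * D * h := by
    have := mul_le_mul_of_nonneg_left hn1 hB0.le
    linarith [mul_nonneg (mul_nonneg hB0.le hD0.le) hh.le]
  have d2φ : ‖k2φ h - f z0‖ ≤ B * D * h := by
    rw [hk2φ h, z2]
    exact (LipF z0 w1).trans hBw1
  have d2θ : ‖k2θ h - g z0‖ ≤ B * D * h := by
    rw [hk2θ h, z2]
    exact (LipG z0 w1).trans hBw1
  obtain ⟨w2, hw2⟩ : ∃ w2 : EuclideanSpace ℝ (Fin m) × EuclideanSpace ℝ (Fin n),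
      w2 = ((α * h / 2) • k2φ h, (lam * h / 2) • k2θ h) := ⟨_, rfl⟩
  have z3 : (φ0 + (α * h / 2) • k2φ h, θ0 + (lam * h / 2) • k2θ h) = z0 + w2 := by
    rw [hw2, hz0, Prod.mk_add_mk]
  have hw21 : w2 - w1 =
      (((α * h / 2) • (k2φ h - f z0), (lam * h / 2) • (k2θ h - g z0)) :
        EuclideanSpace ℝ (Fin m) × EuclideanSpace ℝ (Fin n)) := by
    rw [hw2, hw1, Prod.mk_sub_mk]
    simp [smul_sub]
  have hn21 : ‖w2 - w1‖ ≤ D ^ 2 * h ^ 2 / 2 := by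
    rw [hw21]
    apply pair_norm_le'
    · exact smul_norm_le' (by positivity) d2φ (by rw [hDdef]; linarith [mul_nonneg (sub_nonneg.2 hαa) (mul_nonneg (mul_nonneg ha0.le (mul_nonneg hB0.le hB0.le)) (mul_nonneg hh.le hh.le))])
    · exact smul_norm_le' (by positivity) d2θ (by rw [hDdef]; linarith [mul_nonneg (sub_nonneg.2 hla) (mul_nonneg (mul_nonneg ha0.le (mul_nonneg hB0.le hB0.le)) (mul_nonneg hh.le hh.le))])
  have hn2 : ‖w2‖ ≤ D * h := by
    have e : w2 = w1 + (w2 - w1) := by abel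
    calc ‖w2‖ = ‖w1 + (w2 - w1)‖ := by rw [← e]
      _ ≤ ‖w1‖ + ‖w2 - w1‖ := norm_add_le _ _
      _ ≤ D * h := by linarith [mul_nonneg (sub_nonneg.2 hDh) (mul_nonneg hD0.le hh.le)]
  have hk3f : k3φ h = f (z0 + w2) := by rw [hk3φ h, z3]
  have hk3g : k3θ h = g (z0 + w2) := by rw [hk3θ h, z3]
  have e3φ : ‖k3φ h - f z0 - fderiv ℝ f z0 w1‖ ≤ 2 * B * D ^ 2 * h ^ 2 := by
    have split : k3φ h - f z0 - fderiv ℝ f z0 w1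
        = (f (z0 + w2) - f z0 - fderiv ℝ f z0 w2) + fderiv ℝ f z0 (w2 - w1) := by
      rw [hk3f, map_sub]; abel
    have hDfw : ‖fderiv ℝ f z0 (w2 - w1)‖ ≤ B * (D ^ 2 * h ^ 2 / 2) :=
      ((fderiv ℝ f z0).le_opNorm _).trans
        (mul_le_mul (Pf1 z0) hn21 (norm_nonneg _) hB0.le)
    rw [split]
    calc ‖_ + _‖ ≤ ‖f (z0 + w2) - f z0 - fderiv ℝ f z0 w2‖ + ‖fderiv ℝ f z0 (w2 - w1)‖ :=
          norm_add_le _ _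
      _ ≤ B * ‖w2‖ ^ 2 + B * (D ^ 2 * h ^ 2 / 2) := add_le_add (TayF z0 w2) hDfw
      _ ≤ B * (D * h) ^ 2 + B * (D ^ 2 * h ^ 2 / 2) :=
        add_le_add (mul_le_mul_of_nonneg_left
          (pow_le_pow_left₀ (norm_nonneg w2) hn2 2) hB0.le) le_rfl
      _ ≤ 2 * B * D ^ 2 * h ^ 2 := by
        linarith [mul_nonneg (mul_nonneg hB0.le (mul_nonneg hD0.le hD0.le))
          (mul_nonneg hh.le hh.le)]
  have e3θ : ‖k3θ h - g z0 - fderiv ℝ g z0 w1‖ ≤ 2 * B * D ^ 2 * h ^ 2 := by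
    have split : k3θ h - g z0 - fderiv ℝ g z0 w1
        = (g (z0 + w2) - g z0 - fderiv ℝ g z0 w2) + fderiv ℝ g z0 (w2 - w1) := by
      rw [hk3g, map_sub]; abel
    have hDgw : ‖fderiv ℝ g z0 (w2 - w1)‖ ≤ B * (D ^ 2 * h ^ 2 / 2) :=
      ((fderiv ℝ g z0).le_opNorm _).trans
        (mul_le_mul (Pg1 z0) hn21 (norm_nonneg _) hB0.le)
    rw [split]
    calc ‖_ + _‖ ≤ ‖g (z0 + w2) - g z0 - fderiv ℝ g z0 w2‖ + ‖fderiv ℝ g z0 (w2 - w1)‖ :=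
          norm_add_le _ _
      _ ≤ B * ‖w2‖ ^ 2 + B * (D ^ 2 * h ^ 2 / 2) := add_le_add (TayG z0 w2) hDgw
      _ ≤ B * (D * h) ^ 2 + B * (D ^ 2 * h ^ 2 / 2) :=
        add_le_add (mul_le_mul_of_nonneg_left
          (pow_le_pow_left₀ (norm_nonneg w2) hn2 2) hB0.le) le_rfl
      _ ≤ 2 * B * D ^ 2 * h ^ 2 := by
        linarith [mul_nonneg (mul_nonneg hB0.le (mul_nonneg hD0.le hD0.le))
          (mul_nonneg hh.le hh.le)]
  have d3φ : ‖k3φ h - f z0‖ ≤ B * D * h := by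
    rw [hk3f]
    exact (LipF z0 w2).trans ((mul_le_mul_of_nonneg_left hn2 hB0.le).trans_eq (mul_assoc B D h).symm)
  have d3θ : ‖k3θ h - g z0‖ ≤ B * D * h := by
    rw [hk3g]
    exact (LipG z0 w2).trans ((mul_le_mul_of_nonneg_left hn2 hB0.le).trans_eq (mul_assoc B D h).symm)
  obtain ⟨w3, hw3⟩ : ∃ w3 : EuclideanSpace ℝ (Fin m) × EuclideanSpace ℝ (Fin n),
      w3 = ((α * h) • k3φ h, (lam * h) • k3θ h) := ⟨_, rfl⟩
  have z4 : (φ0 + (α * h) • k3φ h, θ0 + (lam * h) • k3θ h) = z0 + w3 := by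
    rw [hw3, hz0, Prod.mk_add_mk]
  have hw31 : w3 - (2:ℝ) • w1 =
      (((α * h) • (k3φ h - f z0), (lam * h) • (k3θ h - g z0)) :
        EuclideanSpace ℝ (Fin m) × EuclideanSpace ℝ (Fin n)) := by
    rw [hw3, hw1, Prod.smul_mk, Prod.mk_sub_mk, Prod.mk.injEq]
    constructor <;> module
  have hn31 : ‖w3 - (2:ℝ) • w1‖ ≤ D ^ 2 * h ^ 2 := by
    rw [hw31]
    apply pair_norm_le'
    · exact smul_norm_le' (by positivity) d3φ (by rw [hDdef]; linarith [mul_nonneg (sub_nonneg.2 hαa) (mul_nonneg (mul_nonneg ha0.le (mul_nonneg hB0.le hB0.le)) (mul_nonneg hh.le hh.le))])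
    · exact smul_norm_le' (by positivity) d3θ (by rw [hDdef]; linarith [mul_nonneg (sub_nonneg.2 hla) (mul_nonneg (mul_nonneg ha0.le (mul_nonneg hB0.le hB0.le)) (mul_nonneg hh.le hh.le))])
  have hn3 : ‖w3‖ ≤ 2 * D * h := by
    have e : w3 = (2:ℝ) • w1 + (w3 - (2:ℝ) • w1) := by abel
    calc ‖w3‖ = ‖(2:ℝ) • w1 + (w3 - (2:ℝ) • w1)‖ := by rw [← e]
      _ ≤ ‖(2:ℝ) • w1‖ + ‖w3 - (2:ℝ) • w1‖ := norm_add_le _ _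
      _ ≤ 2 * (D * h / 2) + D ^ 2 * h ^ 2 := by
          refine add_le_add ?_ hn31
          rw [norm_smul, Real.norm_eq_abs, abs_two]
          linarith [hn1]
      _ ≤ 2 * D * h := by linarith [mul_nonneg (sub_nonneg.2 hDh) (mul_nonneg hD0.le hh.le)]
  have hk4f : k4φ h = f (z0 + w3) := by rw [hk4φ h, z4]
  have hk4g : k4θ h = g (z0 + w3) := by rw [hk4θ h, z4]
  have e4φ : ‖k4φ h - f z0 - (2:ℝ) • fderiv ℝ f z0 w1‖ ≤ 6 * B * D ^ 2 * h ^ 2 := by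
    have split : k4φ h - f z0 - (2:ℝ) • fderiv ℝ f z0 w1
        = (f (z0 + w3) - f z0 - fderiv ℝ f z0 w3) + fderiv ℝ f z0 (w3 - (2:ℝ) • w1) := by
      rw [hk4f, map_sub, map_smul]; abel
    have hDfw : ‖fderiv ℝ f z0 (w3 - (2:ℝ) • w1)‖ ≤ B * (D ^ 2 * h ^ 2) :=
      ((fderiv ℝ f z0).le_opNorm _).trans
        (mul_le_mul (Pf1 z0) hn31 (norm_nonneg _) hB0.le)
    rw [split]
    calc ‖_ + _‖ ≤ ‖f (z0 + w3) - f z0 - fderiv ℝ f z0 w3‖ +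
          ‖fderiv ℝ f z0 (w3 - (2:ℝ) • w1)‖ := norm_add_le _ _
      _ ≤ B * ‖w3‖ ^ 2 + B * (D ^ 2 * h ^ 2) := add_le_add (TayF z0 w3) hDfw
      _ ≤ B * (2 * D * h) ^ 2 + B * (D ^ 2 * h ^ 2) :=
        add_le_add (mul_le_mul_of_nonneg_left
          (pow_le_pow_left₀ (norm_nonneg w3) hn3 2) hB0.le) le_rfl
      _ ≤ 6 * B * D ^ 2 * h ^ 2 := by
        linarith [mul_nonneg (mul_nonneg hB0.le (mul_nonneg hD0.le hD0.le))
          (mul_nonneg hh.le hh.le)]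
  have e4θ : ‖k4θ h - g z0 - (2:ℝ) • fderiv ℝ g z0 w1‖ ≤ 6 * B * D ^ 2 * h ^ 2 := by
    have split : k4θ h - g z0 - (2:ℝ) • fderiv ℝ g z0 w1
        = (g (z0 + w3) - g z0 - fderiv ℝ g z0 w3) + fderiv ℝ g z0 (w3 - (2:ℝ) • w1) := by
      rw [hk4g, map_sub, map_smul]; abel
    have hDgw : ‖fderiv ℝ g z0 (w3 - (2:ℝ) • w1)‖ ≤ B * (D ^ 2 * h ^ 2) :=
      ((fderiv ℝ g z0).le_opNorm _).trans
        (mul_le_mul (Pg1 z0) hn31 (norm_nonneg _) hB0.le)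
    rw [split]
    calc ‖_ + _‖ ≤ ‖g (z0 + w3) - g z0 - fderiv ℝ g z0 w3‖ +
          ‖fderiv ℝ g z0 (w3 - (2:ℝ) • w1)‖ := norm_add_le _ _
      _ ≤ B * ‖w3‖ ^ 2 + B * (D ^ 2 * h ^ 2) := add_le_add (TayG z0 w3) hDgw
      _ ≤ B * (2 * D * h) ^ 2 + B * (D ^ 2 * h ^ 2) :=
        add_le_add (mul_le_mul_of_nonneg_left
          (pow_le_pow_left₀ (norm_nonneg w3) hn3 2) hB0.le) le_rfl
      _ ≤ 6 * B * D ^ 2 * h ^ 2 := by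
        linarith [mul_nonneg (mul_nonneg hB0.le (mul_nonneg hD0.le hD0.le))
          (mul_nonneg hh.le hh.le)]
  -- expansion of the derivative applied to w1
  have hvf : fderiv ℝ f z0 w1 = (α * h / 2) • fderiv ℝ f z0 (f z0, 0)
      + (lam * h / 2) • fderiv ℝ f z0 (0, g z0) := by
    have e : w1 = (α * h / 2) • ((f z0, 0) :
          EuclideanSpace ℝ (Fin m) × EuclideanSpace ℝ (Fin n))
        + (lam * h / 2) • ((0, g z0) :
          EuclideanSpace ℝ (Fin m) × EuclideanSpace ℝ (Fin n)) := by
      rw [hw1, Prod.smul_mk, Prod.smul_mk, Prod.mk_add_mk]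
      simp
    rw [e, map_add, map_smul, map_smul]
  have hvg : fderiv ℝ g z0 w1 = (α * h / 2) • fderiv ℝ g z0 (f z0, 0)
      + (lam * h / 2) • fderiv ℝ g z0 (0, g z0) := by
    have e : w1 = (α * h / 2) • ((f z0, 0) :
          EuclideanSpace ℝ (Fin m) × EuclideanSpace ℝ (Fin n))
        + (lam * h / 2) • ((0, g z0) :
          EuclideanSpace ℝ (Fin m) × EuclideanSpace ℝ (Fin n)) := by
      rw [hw1, Prod.smul_mk, Prod.smul_mk, Prod.mk_add_mk]
      simp
    rw [e, map_add, map_smul, map_smul]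
  have hsumφ : φ1 h - (φ0 + (α * h) • f z0 +
        (α * lam * h ^ 2 / 2) • fderiv ℝ f z0 (0, g z0) +
        (α ^ 2 * h ^ 2 / 2) • fderiv ℝ f z0 (f z0, 0))
      = (α * h / 6) • ((k1φ h - f z0)
          + (2:ℝ) • (k2φ h - f z0 - fderiv ℝ f z0 w1)
          + (2:ℝ) • (k3φ h - f z0 - fderiv ℝ f z0 w1)
          + (k4φ h - f z0 - (2:ℝ) • fderiv ℝ f z0 w1)) := by
    rw [hφ1 h, hvf]
    module
  have hsumθ : θ1 h - (θ0 + (lam * h) • g z0 +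
        (lam ^ 2 * h ^ 2 / 2) • fderiv ℝ g z0 (0, g z0) +
        (α * lam * h ^ 2 / 2) • fderiv ℝ g z0 (f z0, 0))
      = (lam * h / 6) • ((k1θ h - g z0)
          + (2:ℝ) • (k2θ h - g z0 - fderiv ℝ g z0 w1)
          + (2:ℝ) • (k3θ h - g z0 - fderiv ℝ g z0 w1)
          + (k4θ h - g z0 - (2:ℝ) • fderiv ℝ g z0 w1)) := by
    rw [hθ1 h, hvg]
    module
  have e2φ' : ‖k2φ h - f z0 - fderiv ℝ f z0 w1‖ ≤ B * D ^ 2 * h ^ 2 / 4 :=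
    e2φ.trans (by
      have := mul_le_mul_of_nonneg_left (pow_le_pow_left₀ (norm_nonneg w1) hn1 2) hB0.le
      linarith [this])
  have e2θ' : ‖k2θ h - g z0 - fderiv ℝ g z0 w1‖ ≤ B * D ^ 2 * h ^ 2 / 4 :=
    e2θ.trans (by
      have := mul_le_mul_of_nonneg_left (pow_le_pow_left₀ (norm_nonneg w1) hn1 2) hB0.le
      linarith [this])
  have hSφ : ‖(k1φ h - f z0)
      + (2:ℝ) • (k2φ h - f z0 - fderiv ℝ f z0 w1)
      + (2:ℝ) • (k3φ h - f z0 - fderiv ℝ f z0 w1)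
      + (k4φ h - f z0 - (2:ℝ) • fderiv ℝ f z0 w1)‖ ≤ 11 * B * D ^ 2 * h ^ 2 := by
    have b1 : ‖k1φ h - f z0‖ = 0 := by rw [hk1φ h, sub_self, norm_zero]
    have b2 : ‖(2:ℝ) • (k2φ h - f z0 - fderiv ℝ f z0 w1)‖ ≤ 2 * (B * D ^ 2 * h ^ 2 / 4) := by
      rw [norm_smul, Real.norm_eq_abs, abs_two]; linarith [e2φ']
    have b3 : ‖(2:ℝ) • (k3φ h - f z0 - fderiv ℝ f z0 w1)‖ ≤ 2 * (2 * B * D ^ 2 * h ^ 2) := by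
      rw [norm_smul, Real.norm_eq_abs, abs_two]; linarith [e3φ]
    calc ‖_ + _ + _ + _‖ ≤ ‖(k1φ h - f z0)
          + (2:ℝ) • (k2φ h - f z0 - fderiv ℝ f z0 w1)
          + (2:ℝ) • (k3φ h - f z0 - fderiv ℝ f z0 w1)‖
          + ‖k4φ h - f z0 - (2:ℝ) • fderiv ℝ f z0 w1‖ := norm_add_le _ _
      _ ≤ (‖k1φ h - f z0‖ + ‖(2:ℝ) • (k2φ h - f z0 - fderiv ℝ f z0 w1)‖
            + ‖(2:ℝ) • (k3φ h - f z0 - fderiv ℝ f z0 w1)‖)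
          + ‖k4φ h - f z0 - (2:ℝ) • fderiv ℝ f z0 w1‖ :=
        add_le_add (norm_add₃_le) le_rfl
      _ ≤ 11 * B * D ^ 2 * h ^ 2 := by
          rw [b1]
          linarith [b2, b3, e4φ, mul_nonneg (mul_nonneg hB0.le (pow_nonneg hD0.le 2)) (pow_nonneg hh.le 2)]
  have hSθ : ‖(k1θ h - g z0)
      + (2:ℝ) • (k2θ h - g z0 - fderiv ℝ g z0 w1)
      + (2:ℝ) • (k3θ h - g z0 - fderiv ℝ g z0 w1)
      + (k4θ h - g z0 - (2:ℝ) • fderiv ℝ g z0 w1)‖ ≤ 11 * B * D ^ 2 * h ^ 2 := by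
    have b1 : ‖k1θ h - g z0‖ = 0 := by rw [hk1θ h, sub_self, norm_zero]
    have b2 : ‖(2:ℝ) • (k2θ h - g z0 - fderiv ℝ g z0 w1)‖ ≤ 2 * (B * D ^ 2 * h ^ 2 / 4) := by
      rw [norm_smul, Real.norm_eq_abs, abs_two]; linarith [e2θ']
    have b3 : ‖(2:ℝ) • (k3θ h - g z0 - fderiv ℝ g z0 w1)‖ ≤ 2 * (2 * B * D ^ 2 * h ^ 2) := by
      rw [norm_smul, Real.norm_eq_abs, abs_two]; linarith [e3θ]
    calc ‖_ + _ + _ + _‖ ≤ ‖(k1θ h - g z0)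
          + (2:ℝ) • (k2θ h - g z0 - fderiv ℝ g z0 w1)
          + (2:ℝ) • (k3θ h - g z0 - fderiv ℝ g z0 w1)‖
          + ‖k4θ h - g z0 - (2:ℝ) • fderiv ℝ g z0 w1‖ := norm_add_le _ _
      _ ≤ (‖k1θ h - g z0‖ + ‖(2:ℝ) • (k2θ h - g z0 - fderiv ℝ g z0 w1)‖
            + ‖(2:ℝ) • (k3θ h - g z0 - fderiv ℝ g z0 w1)‖)
          + ‖k4θ h - g z0 - (2:ℝ) • fderiv ℝ g z0 w1‖ :=
        add_le_add (norm_add₃_le) le_rfl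
      _ ≤ 11 * B * D ^ 2 * h ^ 2 := by
          rw [b1]
          linarith [b2, b3, e4θ, mul_nonneg (mul_nonneg hB0.le (pow_nonneg hD0.le 2)) (pow_nonneg hh.le 2)]
  constructor
  · rw [hsumφ, norm_smul, Real.norm_eq_abs, abs_of_pos (by positivity)]
    calc (α * h / 6) * ‖_‖ ≤ (a * h) * (11 * B * D ^ 2 * h ^ 2) := by
          apply mul_le_mul (by linarith [mul_nonneg (sub_nonneg.2 hαa) hh.le, mul_nonneg hα.le hh.le]) hSφ (norm_nonneg _) (by positivity)
      _ = 11 * D ^ 3 * h ^ 3 := by rw [hDdef]; ring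
      _ ≤ 20 * D ^ 3 * h ^ 3 := by linarith [mul_nonneg (pow_nonneg hD0.le 3) (pow_nonneg hh.le 3)]
  · rw [hsumθ, norm_smul, Real.norm_eq_abs, abs_of_pos (by positivity)]
    calc (lam * h / 6) * ‖_‖ ≤ (a * h) * (11 * B * D ^ 2 * h ^ 2) := by
          apply mul_le_mul (by linarith [mul_nonneg (sub_nonneg.2 hla) hh.le, mul_nonneg hlam.le hh.le]) hSθ (norm_nonneg _) (by positivity)
      _ = 11 * D ^ 3 * h ^ 3 := by rw [hDdef]; ring
      _ ≤ 20 * D ^ 3 * h ^ 3 := by linarith [mul_nonneg (pow_nonneg hD0.le 3) (pow_nonneg hh.le 3)]
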